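/- Let a, b ∈ ℂ with a ≠ 0 and b ≠ 0, and let qs₃ = (1/2)(a,a,a,−a,b,b,−b,b)ᵀ ∈ ℂ⁸. Then qs₃ is entangled across the bipartition separating qubit 1 from qubits 2,3: there do not exist u ∈ ℂ² and v ∈ ℂ⁴ such that qs₃ = u ⊗ v. That is, after Alice's entanglement command E₁₂, the input qubit 1 is no longer in a pure individual state. -/

import Mathlib

open Matrix Kronecker

noncomputable section

/-- Kronecker product reindexed to `Fin`-indexed matrices, with the first factor
most significant (lexicographic ordering of bitstrings). -/
def kron {m n p q : ℕ} (A : Matrix (Fin m) (Fin n) ℂ) (B : Matrix (Fin p) (Fin q) ℂ) :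
    Matrix (Fin (m * p)) (Fin (n * q)) ℂ :=
  Matrix.reindex finProdFinEquiv finProdFinEquiv (A ⊗ₖ B)

/-- |+⟩ = (1/√2)(1,1)ᵀ -/
def ketPlus : Matrix (Fin 2) (Fin 1) ℂ := (Real.sqrt 2 : ℂ)⁻¹ • !![1; 1]

/-- |−⟩ = (1/√2)(1,−1)ᵀ -/
def ketMinus : Matrix (Fin 2) (Fin 1) ℂ := (Real.sqrt 2 : ℂ)⁻¹ • !![1; -1]

/-- ⟨+| : conjugate transpose of |+⟩ -/
def braPlus : Matrix (Fin 1) (Fin 2) ℂ := ketPlusᴴ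

/-- ⟨−| : conjugate transpose of |−⟩ -/
def braMinus : Matrix (Fin 1) (Fin 2) ℂ := ketMinusᴴ

/-- ⟨x_s| with |x₀⟩ = |+⟩, |x₁⟩ = |−⟩ -/
def bra : Fin 2 → Matrix (Fin 1) (Fin 2) ℂ := ![braPlus, braMinus]

/-- identity on one qubit -/
def I2 : Matrix (Fin 2) (Fin 2) ℂ := 1

/-- controlled-Z operator CZ = diag(1,1,1,−1) -/
def CZ : Matrix (Fin 4) (Fin 4) ℂ := !![1,0,0,0; 0,1,0,0; 0,0,1,0; 0,0,0,-1]

/-- Pauli X -/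
def X : Matrix (Fin 2) (Fin 2) ℂ := !![0,1; 1,0]

/-- Pauli Z -/
def Z : Matrix (Fin 2) (Fin 2) ℂ := !![1,0; 0,-1]

/-- one-qubit state (a,b)ᵀ -/
def ket (a b : ℂ) : Matrix (Fin 2) (Fin 1) ℂ := !![a; b]

/-- the entangled resource state χ = (1/2)(1,1,1,−1)ᵀ -/
def chi : Matrix (Fin 4) (Fin 1) ℂ := (1/2 : ℂ) • !![1; 1; 1; -1]

/-- qs₃ = (1/2)(a,a,a,−a,b,b,−b,b)ᵀ -/
def qs3 (a b : ℂ) : Matrix (Fin 8) (Fin 1) ℂ := (1/2 : ℂ) • !![a; a; a; -a; b; b; -b; b]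

/-- qs₆ = (1/2)(a+b,a+b,a−b,−a+b)ᵀ -/
def qs6 (a b : ℂ) : Matrix (Fin 4) (Fin 1) ℂ := (1/2 : ℂ) • !![a+b; a+b; a-b; -a+b]

/-- qs₇ = (1/2)(a−b,a−b,a+b,−a−b)ᵀ -/
def qs7 (a b : ℂ) : Matrix (Fin 4) (Fin 1) ℂ := (1/2 : ℂ) • !![a-b; a-b; a+b; -a-b]

theorem stmt17 (a b : ℂ) (ha : a ≠ 0) (hb : b ≠ 0) :
    ¬ ∃ (u : Matrix (Fin 2) (Fin 1) ℂ) (v : Matrix (Fin 4) (Fin 1) ℂ),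
        qs3 a b = (kron u v : Matrix (Fin 8) (Fin 1) ℂ) := by
  rintro ⟨u, v, h⟩
  have h0 : (1/2 : ℂ) * a = u 0 0 * v 0 0 := congrFun (congrFun h 0) 0
  have h3 : (1/2 : ℂ) * (-a) = u 0 0 * v 3 0 := congrFun (congrFun h 3) 0
  have h4 : (1/2 : ℂ) * b = u 1 0 * v 0 0 := congrFun (congrFun h 4) 0
  have h7 : (1/2 : ℂ) * b = u 1 0 * v 3 0 := congrFun (congrFun h 7) 0
  have key : a * b / 4 = -(a * b) / 4 := by
    calc a * b / 4 = (u 0 0 * v 0 0) * (u 1 0 * v 3 0) := by rw [← h0, ← h7]; ring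
    _ = (u 0 0 * v 3 0) * (u 1 0 * v 0 0) := by ring
    _ = -(a * b) / 4 := by rw [← h3, ← h4]; ring
  have hab : a * b = 0 := by
    field_simp at key
    norm_num at key
  exact (mul_ne_zero ha hb) hab
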